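/- arXiv:2502.07891 — 2 statements merged into one kernel-verified Lean document; each statement's English description precedes it below -/
import Mathlib

section
/- (Comparison of skeletons) Let 𝔊 and 𝔊' be two mDAGs on the same node set. If there exist nodes x and y such that the undirected edge between x and y is present in the skeleton of 𝔊' but not in the skeleton of 𝔊, then 𝔊 does not observationally dominate 𝔊': for some assignment of finite cardinalities, some distribution realizable by 𝔊' is not realizable by 𝔊. -/
open scoped Classical

/-! ## Basic structures: pDAGs and mDAGs -/

/-- A partitioned directed acyclic graph (pDAG) with visible node type `V` and
latent node type `L`.  Acyclicity is phrased via the existence of a topological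
rank function, which for finite graphs is equivalent to the absence of directed
cycles. -/
structure pDAG (V L : Type) where
  edge : V ⊕ L → V ⊕ L → Prop
  acyclic : ∃ rank : V ⊕ L → ℕ, ∀ a b, edge a b → rank a < rank b

/-- `P` is a probability distribution on a finite type. -/
def IsDist {α : Type} [Fintype α] (P : α → ℝ) : Prop :=
  (∀ x, 0 ≤ P x) ∧ ∑ x, P x = 1

/-- The joint assignment of outcomes to all (visible and latent) nodes obtained
from an assignment `xv` to the visible nodes and `xl` to the latent nodes. -/
def jointVal {V L : Type} (c : V → ℕ) (k : L → ℕ)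
    (xv : (v : V) → Fin (c v)) (xl : (l : L) → Fin (k l)) :
    (a : V ⊕ L) → Fin (Sum.elim c k a)
  | Sum.inl v => xv v
  | Sum.inr l => xl l

/-- A probability distribution `P` over the visible variables (with cardinalities `c`)
is realizable by the pDAG `G` (with classical unrestricted semantics, arbitrary finite
cardinalities of the latent variables) if there are latent cardinalities `k`, error
cardinalities `e`, error distributions `PE` and functions `f` (each depending only on
the values of the parents and the local error variable) whose induced marginal on the
visible variables is `P`. -/
def pDAG.Realizable {V L : Type} [Fintype V] [Fintype L] [DecidableEq V] [DecidableEq L]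
    (G : pDAG V L) (c : V → ℕ) (P : ((v : V) → Fin (c v)) → ℝ) : Prop :=
  IsDist P ∧
  ∃ (k : L → ℕ) (e : V ⊕ L → ℕ)
    (PE : (a : V ⊕ L) → Fin (e a) → ℝ)
    (f : (a : V ⊕ L) → ((b : V ⊕ L) → Fin (Sum.elim c k b)) → Fin (e a) →
      Fin (Sum.elim c k a)),
    (∀ a, IsDist (PE a)) ∧
    (∀ a g g' ε, (∀ b, G.edge b a → g b = g' b) → f a g ε = f a g' ε) ∧
    ∀ xv : (v : V) → Fin (c v),
      P xv = ∑ xl : (l : L) → Fin (k l), ∑ ε : (a : V ⊕ L) → Fin (e a),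
        ∏ a : V ⊕ L,
          (if jointVal c k xv xl a = f a (jointVal c k xv xl) (ε a) then (1:ℝ) else 0)
            * PE a (ε a)

/-- `G` observationally dominates `G'`: for every assignment of finite cardinalities to
the visible variables, every distribution realizable by `G'` is realizable by `G`. -/
def pDAG.ObsDominates {V L L' : Type} [Fintype V] [Fintype L] [Fintype L']
    [DecidableEq V] [DecidableEq L] [DecidableEq L']
    (G : pDAG V L) (G' : pDAG V L') : Prop :=
  ∀ (c : V → ℕ) (P : ((v : V) → Fin (c v)) → ℝ), G'.Realizable c P → G.Realizable c P

/-- An mDAG: a DAG on the node type `V` together with a simplicial complex on `V`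
(a family of finite subsets containing all singletons and closed under subsets). -/
structure mDAG (V : Type) where
  edge : V → V → Prop
  acyclic : ∃ rank : V → ℕ, ∀ a b, edge a b → rank a < rank b
  faces : Finset (Finset V)
  singleton_mem : ∀ v : V, {v} ∈ faces
  down_closed : ∀ A B : Finset V, A ⊆ B → B ∈ faces → A ∈ faces

namespace mDAG

variable {V : Type}

/-- A facet is an inclusion-maximal face of the simplicial complex. -/
def IsFacet (G : mDAG V) (A : Finset V) : Prop :=
  A ∈ G.faces ∧ ∀ B ∈ G.faces, A ⊆ B → A = B

/-- An mDAG is confounder-free if every facet of its simplicial complex is a singleton. -/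
def ConfounderFree (G : mDAG V) : Prop :=
  ∀ A : Finset V, G.IsFacet A → ∃ v : V, A = {v}

/-- An mDAG is directed-edge-free if its directed structure has no edges. -/
def DirectedEdgeFree (G : mDAG V) : Prop :=
  ∀ a b : V, ¬ G.edge a b

/-- `G` structurally dominates `G'` if the directed edges of `G'` are a subset of those
of `G` and the simplicial complex of `G'` is contained in that of `G`. -/
def StructDominates (G G' : mDAG V) : Prop :=
  (∀ a b : V, G'.edge a b → G.edge a b) ∧ G'.faces ⊆ G.faces

/-- The type of facets of an mDAG. -/
def Facets (G : mDAG V) : Type := {A : Finset V // G.IsFacet A}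

noncomputable instance instFintypeFacets [Fintype V] [DecidableEq V] (G : mDAG V) :
    Fintype G.Facets := Subtype.fintype _

noncomputable instance instDecidableEqFacets (G : mDAG V) :
    DecidableEq G.Facets := Classical.decEq _

/-- The canonical pDAG of an mDAG: the visible nodes carry the directed structure, and
there is one exogenous latent node per facet, whose children are exactly the members
of that facet. -/
def canon (G : mDAG V) : pDAG V G.Facets where
  edge a b :=
    match a, b with
    | Sum.inl u, Sum.inl v => G.edge u v
    | Sum.inr A, Sum.inl v => v ∈ A.1
    | _, Sum.inr _ => False
  acyclic := by
    obtain ⟨r, hr⟩ := G.acyclic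
    refine ⟨Sum.elim (fun v => r v + 1) (fun _ => 0), ?_⟩
    rintro (u | A) (v | B) h
    · simpa using hr u v h
    · exact h.elim
    · simp
    · exact h.elim

/-- Realizability of a distribution over the visible variables by an mDAG (via its
canonical pDAG). -/
def Realizable [Fintype V] [DecidableEq V] (G : mDAG V) (c : V → ℕ)
    (P : ((v : V) → Fin (c v)) → ℝ) : Prop :=
  G.canon.Realizable c P

/-- Observational dominance of mDAGs: for every assignment of finite cardinalities to
the visible nodes, every distribution realizable by `G'` is realizable by `G`. -/
def ObsDominates [Fintype V] [DecidableEq V] (G G' : mDAG V) : Prop :=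
  ∀ (c : V → ℕ) (P : ((v : V) → Fin (c v)) → ℝ), G'.Realizable c P → G.Realizable c P

/-- Observational equivalence of mDAGs. -/
def ObsEquiv [Fintype V] [DecidableEq V] (G G' : mDAG V) : Prop :=
  ∀ (c : V → ℕ) (P : ((v : V) → Fin (c v)) → ℝ), G.Realizable c P ↔ G'.Realizable c P

/-- Consistency with the fixed nodal ordering given by the order on `V`:
a later node is never an ancestor of an earlier node. -/
def OrderConsistent [LT V] (G : mDAG V) : Prop :=
  ∀ i j : V, i < j → ¬ Relation.TransGen G.edge j i

/-- `G'` is obtained from `G` by relabelling the nodes with the permutation `π`. -/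
def IsRelabel (π : Equiv.Perm V) (G G' : mDAG V) : Prop :=
  (∀ a b : V, G'.edge (π a) (π b) ↔ G.edge a b) ∧
  G'.faces = G.faces.image (Finset.image π)

/-- Adjacency in the skeleton of an mDAG: a directed edge in either direction, or
joint membership in some face of the simplicial complex. -/
def skelAdj (G : mDAG V) (u w : V) : Prop :=
  G.edge u w ∨ G.edge w u ∨ ∃ A ∈ G.faces, u ∈ A ∧ w ∈ A

end mDAG

/-! ## d-separation and e-separation -/

/-- Undirected adjacency underlying a directed graph. -/
def AdjRel {N : Type} (E : N → N → Prop) (a b : N) : Prop := E a b ∨ E b a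

/-- The middle node `y` of a consecutive triple `(x, y, z)` of a path does not block the
path given the conditioning set `C`: if `y` is a collider it has a descendant in `C`
(possibly itself), and if it is a non-collider it is not in `C`. -/
def ActiveTriple {N : Type} (E : N → N → Prop) (C : Set N) (x y z : N) : Prop :=
  ((E x y ∧ E z y) ∧ ∃ d ∈ C, Relation.ReflTransGen E y d) ∨
  (¬(E x y ∧ E z y) ∧ y ∉ C)

/-- Every consecutive triple of the path is active given the conditioning set `C`. -/
def TriplesActive {N : Type} (E : N → N → Prop) (C : Set N) : List N → Prop
  | x :: y :: z :: rest => ActiveTriple E C x y z ∧ TriplesActive E C (y :: z :: rest)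
  | _ => True

/-- `A` and `B` are d-connected given `C`: there is a (repetition-free, undirected)
path from a node of `A` to a node of `B` that is not blocked by `C`. -/
def DConnected {N : Type} (E : N → N → Prop) (A B C : Set N) : Prop :=
  ∃ p : List N, p.Chain' (AdjRel E) ∧ p.Nodup ∧
    (∃ a ∈ A, p.head? = some a) ∧ (∃ b ∈ B, p.getLast? = some b) ∧
    TriplesActive E C p

/-- d-separation: every undirected path from `A` to `B` is blocked by `C`. -/
def DSeparated {N : Type} (E : N → N → Prop) (A B C : Set N) : Prop :=
  ¬ DConnected E A B C

namespace mDAG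

variable {V : Type}

/-- d-separation of sets of (visible) nodes of an mDAG, evaluated in its canonical pDAG. -/
def dsep (G : mDAG V) (A B C : Set V) : Prop :=
  DSeparated G.canon.edge (Sum.inl '' A) (Sum.inl '' B) (Sum.inl '' C)

end mDAG

/-- The edge relation of a pDAG after deletion of the visible nodes in `D`. -/
def delEdge {V L : Type} (E : V ⊕ L → V ⊕ L → Prop) (D : Set V) (a b : V ⊕ L) : Prop :=
  E a b ∧ (∀ v, a = Sum.inl v → v ∉ D) ∧ (∀ v, b = Sum.inl v → v ∉ D)

namespace mDAG

variable {V : Type}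

/-- e-separation: `A` and `B` are e-separated by `C` after deletion of `D` if they are
d-separated by `C` in the subgraph of the canonical pDAG obtained by deleting the nodes
in `D`. -/
def eSep (G : mDAG V) (A B C D : Set V) : Prop :=
  DSeparated (delEdge G.canon.edge D) (Sum.inl '' A) (Sum.inl '' B) (Sum.inl '' C)

end mDAG

/-! ## Conditional independence -/

/-- The probability that the variables in `S` take the values specified by `g`. -/
noncomputable def margProb {V : Type} [Fintype V] [DecidableEq V] (c : V → ℕ)
    (P : ((v : V) → Fin (c v)) → ℝ) (S : Set V) (g : (v : V) → Fin (c v)) : ℝ :=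
  ∑ x : (v : V) → Fin (c v), if ∀ v ∈ S, x v = g v then P x else 0

/-- `X_A ⊥⊥ X_B | X_C` in the distribution `P`:
`P(X_A X_B | X_C) = P(X_A | X_C) P(X_B | X_C)` whenever the conditioning event has
positive probability. -/
def CondIndep {V : Type} [Fintype V] [DecidableEq V] (c : V → ℕ)
    (P : ((v : V) → Fin (c v)) → ℝ) (A B C : Set V) : Prop :=
  ∀ g : (v : V) → Fin (c v), 0 < margProb c P C g →
    margProb c P (A ∪ B ∪ C) g * margProb c P C g
      = margProb c P (A ∪ C) g * margProb c P (B ∪ C) g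

/-! ## Districts, closures and densely connected pairs -/

namespace mDAG

variable {V : Type}

/-- One step of connection through a common face, within the node subset `S`. -/
def faceStep (G : mDAG V) (S : Set V) (x y : V) : Prop :=
  x ∈ S ∧ y ∈ S ∧ ∃ F ∈ G.faces, x ∈ F ∧ y ∈ F

/-- The district of the set `A` in the sub-mDAG induced on `S`. -/
def disIn (G : mDAG V) (S A : Set V) : Set V :=
  {w | ∃ a ∈ A, Relation.ReflTransGen (G.faceStep S) a w}

/-- The ancestors of the set `A` (including `A` itself) in the directed structure
restricted to `S`. -/
def anIn (G : mDAG V) (S A : Set V) : Set V :=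
  {w | ∃ a ∈ A, Relation.ReflTransGen (fun x y => x ∈ S ∧ y ∈ S ∧ G.edge x y) w a}

/-- The alternating sequence of district and ancestor restrictions used to define
the closure of a set of nodes. -/
def closureSeq (G : mDAG V) (A : Set V) : ℕ → Set V
  | 0 => Set.univ
  | n + 1 =>
      if n % 2 = 0 then G.disIn (G.closureSeq A n) A else G.anIn (G.closureSeq A n) A

/-- The closure of a set of nodes: the limit (intersection) of the decreasing
alternating sequence. -/
def closure (G : mDAG V) (A : Set V) : Set V := ⋂ n, G.closureSeq A n

/-- `S` is bidirected-connected: it forms a single district of the induced sub-mDAG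
on `S`. -/
def BidirConnected (G : mDAG V) (S : Set V) : Prop :=
  ∀ u ∈ S, ∀ w ∈ S, Relation.ReflTransGen (G.faceStep S) u w

/-- Two distinct nodes `v`, `w` are densely connected. -/
def DenselyConnected (G : mDAG V) (v w : V) : Prop :=
  (∃ u ∈ G.closure {w}, G.edge v u) ∨
  (∃ u ∈ G.closure {v}, G.edge w u) ∨
  G.BidirConnected (G.closure {v, w})

/-- `S` is a realizable support of the mDAG `G` at cardinalities `c`: some distribution
realizable by `G` at `c` has support exactly `S`. -/
def RealizableSupport [Fintype V] [DecidableEq V] (G : mDAG V) (c : V → ℕ)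
    (S : Set ((v : V) → Fin (c v))) : Prop :=
  ∃ P : ((v : V) → Fin (c v)) → ℝ, G.Realizable c P ∧ ∀ x, x ∈ S ↔ 0 < P x

end mDAG
/-! ## Auxiliary material for Statement 11 -/

section Statement11Aux

/-- Any two elements of `Fin n` with `n = 1` coincide. -/
lemma fin_one_eq {n : ℕ} (h : n = 1) (u w : Fin n) : u = w := by
  subst h; exact Subsingleton.elim u w

lemma mDAG.no_self_edge {V : Type} (G : mDAG V) (a : V) : ¬ G.edge a a := by
  obtain ⟨r, hr⟩ := G.acyclic
  exact fun hE => lt_irrefl _ (hr a a hE)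

/-- Every face of the simplicial complex lies inside a facet. -/
lemma mDAG.exists_facet_superset {V : Type} [DecidableEq V] (G : mDAG V) {A : Finset V}
    (hA : A ∈ G.faces) : ∃ M : Finset V, G.IsFacet M ∧ A ⊆ M := by
  classical
  set t := G.faces.filter (fun B => A ⊆ B) with ht
  have hAt : A ∈ t := by simp [ht, hA]
  obtain ⟨M, hMt, hMmax⟩ := Finset.exists_max_image t (fun B => B.card) ⟨A, hAt⟩
  have hMfaces : M ∈ G.faces := (Finset.mem_filter.mp hMt).1
  have hAM : A ⊆ M := (Finset.mem_filter.mp hMt).2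
  refine ⟨M, ⟨hMfaces, ?_⟩, hAM⟩
  intro B hB hMB
  exact Finset.eq_of_subset_of_card_le hMB
    (hMmax B (Finset.mem_filter.mpr ⟨hB, hAM.trans hMB⟩))

/-- The perfectly correlated distribution on the pair of variables `x`, `y`. -/
noncomputable def Pcorr {V : Type} (c : V → ℕ) (x y : V) :
    ((v : V) → Fin (c v)) → ℝ :=
  fun xv => if (xv x).val = (xv y).val then 1/2 else 0

/-- A point of the visible outcome space with prescribed values at `x` and at `y`. -/
noncomputable def ptFun {V : Type} [DecidableEq V] (c : V → ℕ) (hc0 : ∀ v, 0 < c v)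
    (x y : V) (i j : Fin 2) : (v : V) → Fin (c v) :=
  fun v => if v = x then ⟨i.val % c v, Nat.mod_lt _ (hc0 v)⟩
    else if v = y then ⟨j.val % c v, Nat.mod_lt _ (hc0 v)⟩ else ⟨0, hc0 v⟩

lemma ptFun_x {V : Type} [DecidableEq V] (c : V → ℕ) (hc0 : ∀ v, 0 < c v)
    (x y : V) (hcx : c x = 2) (i j : Fin 2) :
    (ptFun c hc0 x y i j x).val = i.val := by
  simp only [ptFun, if_pos rfl]
  exact Nat.mod_eq_of_lt (by omega)

lemma ptFun_y {V : Type} [DecidableEq V] (c : V → ℕ) (hc0 : ∀ v, 0 < c v)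
    (x y : V) (hxy : x ≠ y) (hcy : c y = 2) (i j : Fin 2) :
    (ptFun c hc0 x y i j y).val = j.val := by
  simp only [ptFun, if_neg (Ne.symm hxy), if_pos rfl]
  exact Nat.mod_eq_of_lt (by omega)

lemma ptFun_bijective {V : Type} [DecidableEq V] (c : V → ℕ) (hc0 : ∀ v, 0 < c v)
    (x y : V) (hxy : x ≠ y) (hcx : c x = 2) (hcy : c y = 2)
    (hc1 : ∀ v, v ≠ x → v ≠ y → c v = 1) :
    Function.Bijective (fun p : Fin 2 × Fin 2 => ptFun c hc0 x y p.1 p.2) := by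
  constructor
  · intro p q hpq
    have h1 := congrArg (fun f => (f x).val) hpq
    have h2 := congrArg (fun f => (f y).val) hpq
    simp only [ptFun_x c hc0 x y hcx, ptFun_y c hc0 x y hxy hcy] at h1 h2
    exact Prod.ext (Fin.ext h1) (Fin.ext h2)
  · intro xv
    refine ⟨(⟨(xv x).val, by omega⟩, ⟨(xv y).val, by omega⟩), ?_⟩
    funext v
    by_cases hvx : v = x
    · subst hvx
      apply Fin.ext
      rw [ptFun_x c hc0 v y hcx]
    · by_cases hvy : v = y
      · subst hvy
        apply Fin.ext
        rw [ptFun_y c hc0 x v hxy hcy]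
      · exact fin_one_eq (hc1 v hvx hvy) _ _

lemma sum_ptFun {V : Type} [Fintype V] [DecidableEq V] (c : V → ℕ) (hc0 : ∀ v, 0 < c v)
    (x y : V) (hxy : x ≠ y) (hcx : c x = 2) (hcy : c y = 2)
    (hc1 : ∀ v, v ≠ x → v ≠ y → c v = 1) (F : ((v : V) → Fin (c v)) → ℝ) :
    ∑ xv, F xv = ∑ p : Fin 2 × Fin 2, F (ptFun c hc0 x y p.1 p.2) :=
  (Fintype.sum_bijective _ (ptFun_bijective c hc0 x y hxy hcx hcy hc1) _ _
    (fun _ => rfl)).symm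

lemma Pcorr_ptFun {V : Type} [DecidableEq V] (c : V → ℕ) (hc0 : ∀ v, 0 < c v)
    (x y : V) (hxy : x ≠ y) (hcx : c x = 2) (hcy : c y = 2) (i j : Fin 2) :
    Pcorr c x y (ptFun c hc0 x y i j) = if i.val = j.val then 1/2 else 0 := by
  unfold Pcorr
  rw [ptFun_x c hc0 x y hcx, ptFun_y c hc0 x y hxy hcy]

lemma isDist_Pcorr {V : Type} [Fintype V] [DecidableEq V] (c : V → ℕ)
    (x y : V) (hxy : x ≠ y) (hcx : c x = 2) (hcy : c y = 2)
    (hc1 : ∀ v, v ≠ x → v ≠ y → c v = 1) (hc0 : ∀ v, 0 < c v) :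
    IsDist (Pcorr c x y) := by
  constructor
  · intro xv
    unfold Pcorr
    split <;> norm_num
  · rw [sum_ptFun c hc0 x y hxy hcx hcy hc1]
    rw [Finset.sum_congr rfl (fun p _ => Pcorr_ptFun c hc0 x y hxy hcx hcy p.1 p.2)]
    rw [Fintype.sum_prod_type]
    simp [Fin.sum_univ_two]
    norm_num

/-- Functions of blocks of independent variables are uncorrelated. -/
lemma indep_factor {ι : Type} [Fintype ι] [DecidableEq ι] (e : ι → ℕ) (he : ∀ a, 0 < e a)
    (w : (a : ι) → Fin (e a) → ℝ) (hw : ∀ a, ∑ t, w a t = 1)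
    (p : ι → Prop) (φ ψ : ((a : ι) → Fin (e a)) → ℝ)
    (hφ : ∀ ε ε', (∀ a, p a → ε a = ε' a) → φ ε = φ ε')
    (hψ : ∀ ε ε', (∀ a, ¬ p a → ε a = ε' a) → ψ ε = ψ ε') :
    ∑ ε, φ ε * ψ ε * ∏ a, w a (ε a)
      = (∑ ε, φ ε * ∏ a, w a (ε a)) * (∑ ε, ψ ε * ∏ a, w a (ε a)) := by
  classical
  set E := Equiv.piEquivPiSubtypeProd p (fun a => Fin (e a)) with hE
  have hsum_eq : ∀ X : ((a : ι) → Fin (e a)) → ℝ,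
      ∑ ε, X ε = ∑ q, X (E.symm q) :=
    fun X => Fintype.sum_equiv E _ _ (fun ε => by rw [Equiv.symm_apply_apply])
  set d1 : (a : {a // p a}) → Fin (e a.1) := fun a => ⟨0, he a.1⟩ with hd1
  set d2 : (a : {a // ¬ p a}) → Fin (e a.1) := fun a => ⟨0, he a.1⟩ with hd2
  have hEsymm : ∀ (q) (a : ι),
      E.symm q a = if h : p a then q.1 ⟨a, h⟩ else q.2 ⟨a, h⟩ := fun q a => rfl
  have hφ1 : ∀ (g : (a : {a // p a}) → Fin (e a.1)) (h : (a : {a // ¬ p a}) → Fin (e a.1)),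
      φ (E.symm (g, h)) = φ (E.symm (g, d2)) := by
    intro g h; apply hφ; intro a hpa; rw [hEsymm, hEsymm, dif_pos hpa, dif_pos hpa]
  have hψ1 : ∀ (g : (a : {a // p a}) → Fin (e a.1)) (h : (a : {a // ¬ p a}) → Fin (e a.1)),
      ψ (E.symm (g, h)) = ψ (E.symm (d1, h)) := by
    intro g h; apply hψ; intro a hpa; rw [hEsymm, hEsymm, dif_neg hpa, dif_neg hpa]
  have hw1 : ∀ (g : (a : {a // p a}) → Fin (e a.1)) (h : (a : {a // ¬ p a}) → Fin (e a.1)),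
      (∏ a, w a (E.symm (g, h) a))
      = (∏ a : {a // p a}, w a.1 (g a)) * (∏ a : {a // ¬ p a}, w a.1 (h a)) := by
    intro g h
    rw [← Fintype.prod_subtype_mul_prod_subtype p (fun a => w a (E.symm (g, h) a))]
    congr 1
    · exact Finset.prod_congr rfl fun a _ => by rw [hEsymm, dif_pos a.2]
    · exact Finset.prod_congr rfl fun a _ => by rw [hEsymm, dif_neg a.2]
  have hW1 : ∑ g : (a : {a // p a}) → Fin (e a.1), ∏ a, w a.1 (g a) = 1 := by
    rw [← Fintype.piFinset_univ, ← Finset.prod_univ_sum]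
    exact Finset.prod_eq_one fun a _ => hw a.1
  have hW2 : ∑ g : (a : {a // ¬ p a}) → Fin (e a.1), ∏ a, w a.1 (g a) = 1 := by
    rw [← Fintype.piFinset_univ, ← Finset.prod_univ_sum]
    exact Finset.prod_eq_one fun a _ => hw a.1
  have key0 : ∑ ε, φ ε * ψ ε * ∏ a, w a (ε a)
      = (∑ g : (a : {a // p a}) → Fin (e a.1),
          φ (E.symm (g, d2)) * ∏ a : {a // p a}, w a.1 (g a))
        * (∑ g : (a : {a // ¬ p a}) → Fin (e a.1),
          ψ (E.symm (d1, g)) * ∏ a : {a // ¬ p a}, w a.1 (g a)) := by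
    rw [hsum_eq (fun ε => φ ε * ψ ε * ∏ a, w a (ε a))]
    rw [Fintype.sum_prod_type, Finset.sum_mul_sum]
    exact Finset.sum_congr rfl fun g _ => Finset.sum_congr rfl fun h _ => by
      rw [hφ1 g h, hψ1 g h, hw1 g h]; ring
  have key1 : ∑ ε, φ ε * ∏ a, w a (ε a)
      = ∑ g : (a : {a // p a}) → Fin (e a.1),
          φ (E.symm (g, d2)) * ∏ a : {a // p a}, w a.1 (g a) := by
    rw [hsum_eq (fun ε => φ ε * ∏ a, w a (ε a))]
    rw [Fintype.sum_prod_type]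
    have : ∀ (g : (a : {a // p a}) → Fin (e a.1)),
        ∑ h : (a : {a // ¬ p a}) → Fin (e a.1), φ (E.symm (g, h)) * ∏ a, w a (E.symm (g, h) a)
        = φ (E.symm (g, d2)) * ∏ a : {a // p a}, w a.1 (g a) := by
      intro g
      rw [Finset.sum_congr rfl (fun h _ => by
        rw [hφ1 g h, hw1 g h, ← mul_assoc])]
      rw [← Finset.mul_sum, hW2, mul_one]
    exact Finset.sum_congr rfl fun g _ => this g
  have key2 : ∑ ε, ψ ε * ∏ a, w a (ε a)
      = ∑ g : (a : {a // ¬ p a}) → Fin (e a.1),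
          ψ (E.symm (d1, g)) * ∏ a : {a // ¬ p a}, w a.1 (g a) := by
    rw [hsum_eq (fun ε => ψ ε * ∏ a, w a (ε a))]
    rw [Fintype.sum_prod_type]
    have : ∀ (g : (a : {a // p a}) → Fin (e a.1)),
        ∑ h : (a : {a // ¬ p a}) → Fin (e a.1), ψ (E.symm (g, h)) * ∏ a, w a (E.symm (g, h) a)
        = (∏ a : {a // p a}, w a.1 (g a)) * ∑ h : (a : {a // ¬ p a}) → Fin (e a.1),
            ψ (E.symm (d1, h)) * ∏ a : {a // ¬ p a}, w a.1 (h a) := by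
      intro g
      rw [Finset.mul_sum]
      exact Finset.sum_congr rfl fun h _ => by rw [hψ1 g h, hw1 g h]; ring
    rw [Finset.sum_congr rfl (fun g _ => this g)]
    rw [← Finset.sum_mul, hW1, one_mul]
  rw [key0, key1, key2]

end Statement11Aux
section Statement11Realize

variable {V : Type} [Fintype V] [DecidableEq V]

/-- Uniform construction: if some (visible or latent) node `a₀` of the canonical pDAG
of `H` can take two values and is (or points to) both `x` and `y`, then the perfectly
correlated distribution on `x, y` is realizable by `H`. -/
lemma realize_src (H : mDAG V) (x y : V) (hxy : x ≠ y) (c : V → ℕ)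
    (hcx : c x = 2) (hcy : c y = 2) (hc1 : ∀ v, v ≠ x → v ≠ y → c v = 1)
    (k : H.Facets → ℕ) (a₀ : V ⊕ H.Facets)
    (hm2 : Sum.elim c k a₀ = 2) (hk1 : ∀ l, (Sum.inr l : V ⊕ H.Facets) ≠ a₀ → k l = 1)
    (hex : a₀ = Sum.inl x ∨ H.canon.edge a₀ (Sum.inl x))
    (hey : a₀ = Sum.inl y ∨ H.canon.edge a₀ (Sum.inl y)) :
    H.Realizable c (Pcorr c x y) := by
  classical
  have hc0 : ∀ v, 0 < c v := by
    intro v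
    by_cases h1 : v = x
    · rw [h1, hcx]; omega
    by_cases h2 : v = y
    · rw [h2, hcy]; omega
    rw [hc1 v h1 h2]; omega
  have hm0 : ∀ a : V ⊕ H.Facets, 0 < Sum.elim c k a := by
    intro a
    by_cases ha : a = a₀
    · rw [ha, hm2]; omega
    cases a with
    | inl v => exact hc0 v
    | inr l => have := hk1 l ha; simp only [Sum.elim_inr]; omega
  have hk0 : ∀ l, 0 < k l := fun l => hm0 (Sum.inr l)
  -- the value of an `Sum.elim`-style evaluation at `a₀` when the two visible values agree
  have ha₀elim : ∀ (xv : (v : V) → Fin (c v)), (xv x).val = (xv y).val →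
      Sum.elim (fun v => (xv v).val) (fun l => (xv x).val % k l) a₀ = (xv x).val := by
    intro xv hv
    have hvx2 : (xv x).val < 2 := by have := (xv x).isLt; omega
    cases a₀ with
    | inl v =>
      simp only [Sum.elim_inl]
      have hcv : c v = 2 := hm2
      by_cases hvx : v = x
      · rw [hvx]
      by_cases hvy : v = y
      · rw [hvy]; exact hv.symm
      · rw [hc1 v hvx hvy] at hcv; omega
    | inr l =>
      simp only [Sum.elim_inr]
      have h2 : k l = 2 := hm2
      rw [h2]
      omega
  set e : V ⊕ H.Facets → ℕ := fun a => if a = a₀ then 2 else 1 with he_def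
  have he0 : ∀ a, 0 < e a := by
    intro a; rw [he_def]; by_cases h : a = a₀ <;> simp [h]
  set PE : (a : V ⊕ H.Facets) → Fin (e a) → ℝ := fun a _ => ((e a : ℝ))⁻¹ with hPE_def
  set f : (a : V ⊕ H.Facets) → ((b : V ⊕ H.Facets) → Fin (Sum.elim c k b)) →
      Fin (e a) → Fin (Sum.elim c k a) := fun a g t =>
    if a = a₀ then ⟨t.val % Sum.elim c k a, Nat.mod_lt _ (hm0 a)⟩
      else ⟨(g a₀).val % Sum.elim c k a, Nat.mod_lt _ (hm0 a)⟩ with hf_def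
  have hval_f : ∀ a g t, (f a g t).val
      = if a = a₀ then t.val % Sum.elim c k a else (g a₀).val % Sum.elim c k a := by
    intro a g t; rw [hf_def]; by_cases h : a = a₀ <;> simp [h]
  have hPE : ∀ a, IsDist (PE a) := by
    intro a
    constructor
    · intro t; rw [hPE_def]; positivity
    · rw [hPE_def, Finset.sum_const, Finset.card_univ, Fintype.card_fin, nsmul_eq_mul]
      apply mul_inv_cancel₀
      have := he0 a
      positivity
  have hloc : ∀ a g g' t, (∀ b, H.canon.edge b a → g b = g' b) → f a g t = f a g' t := by
    intro a g g' t hpar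
    by_cases ha : a = a₀
    · rw [hf_def]; simp [ha]
    · rw [hf_def]; simp only [if_neg ha]
      by_cases hone : Sum.elim c k a = 1
      · exact fin_one_eq hone _ _
      · have hga : g a₀ = g' a₀ := by
          apply hpar
          cases a with
          | inl v =>
            have hv : v = x ∨ v = y := by
              by_contra hno
              push_neg at hno
              exact hone (hc1 v hno.1 hno.2)
            rcases hv with rfl | rfl
            · rcases hex with h0 | h0
              · exact absurd h0.symm ha
              · exact h0
            · rcases hey with h0 | h0
              · exact absurd h0.symm ha
              · exact h0
          | inr l => exact absurd (hk1 l ha) hone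
        rw [hga]
  refine ⟨isDist_Pcorr c x y hxy hcx hcy hc1 hc0, k, e, PE, f, hPE, hloc, ?_⟩
  intro xv
  have hvx2 : (xv x).val < 2 := by have := (xv x).isLt; omega
  have hvy2 : (xv y).val < 2 := by have := (xv y).isLt; omega
  set Cond : ((l : H.Facets) → Fin (k l)) → ((a : V ⊕ H.Facets) → Fin (e a)) → Prop :=
    fun xl ε => ∀ a, jointVal c k xv xl a = f a (jointVal c k xv xl) (ε a) with hCond_def
  have hPEprod : ∀ (ε : (a : V ⊕ H.Facets) → Fin (e a)), (∏ a, PE a (ε a)) = 1/2 := by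
    intro ε
    have h1 : ∀ b : V ⊕ H.Facets, b ≠ a₀ → PE b (ε b) = 1 := by
      intro b hb
      show ((e b : ℝ))⁻¹ = 1
      have h2 : e b = 1 := if_neg hb
      rw [h2]; norm_num
    rw [Finset.prod_eq_single a₀ (fun b _ hb => h1 b hb)
      (fun hmem => absurd (Finset.mem_univ _) hmem)]
    show ((e a₀ : ℝ))⁻¹ = 1/2
    have h2 : e a₀ = 2 := if_pos rfl
    rw [h2]; norm_num
  have hterm : ∀ xl ε,
      (∏ a, (if jointVal c k xv xl a = f a (jointVal c k xv xl) (ε a) then (1:ℝ) else 0)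
        * PE a (ε a))
      = (if Cond xl ε then (1:ℝ) else 0) * (1/2) := by
    intro xl ε
    rw [Finset.prod_mul_distrib, Fintype.prod_boole, hPEprod]
    congr 1
  -- the value of the joint assignment at `a₀` is forced under `Cond`
  have hCval : ∀ xl ε, Cond xl ε →
      (jointVal c k xv xl a₀).val = (xv x).val ∧ (jointVal c k xv xl a₀).val = (xv y).val := by
    intro xl ε hC
    have hja : (jointVal c k xv xl a₀).val < 2 := by
      have h2 := (jointVal c k xv xl a₀).isLt
      omega
    constructor
    · by_cases hax : a₀ = Sum.inl x
      · rw [hax]; exact rfl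
      · have hC1 := congrArg Fin.val (hC (Sum.inl x))
        rw [hval_f, if_neg (fun hh => hax hh.symm)] at hC1
        have hred : (jointVal c k xv xl (Sum.inl x)).val = (xv x).val := rfl
        rw [hred] at hC1
        have hcx2 : Sum.elim c k (Sum.inl x) = 2 := hcx
        rw [hcx2] at hC1
        omega
    · by_cases hay : a₀ = Sum.inl y
      · rw [hay]; exact rfl
      · have hC1 := congrArg Fin.val (hC (Sum.inl y))
        rw [hval_f, if_neg (fun hh => hay hh.symm)] at hC1
        have hred : (jointVal c k xv xl (Sum.inl y)).val = (xv y).val := rfl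
        rw [hred] at hC1
        have hcy2 : Sum.elim c k (Sum.inl y) = 2 := hcy
        rw [hcy2] at hC1
        omega
  have hjall : ∀ (xl : (l : H.Facets) → Fin (k l)) (a : V ⊕ H.Facets),
      (jointVal c k xv xl a).val
        = Sum.elim (fun v => (xv v).val) (fun l => (xl l).val) a := by
    intro xl a; cases a <;> rfl
  set xls : (l : H.Facets) → Fin (k l) :=
    fun l => ⟨(xv x).val % k l, Nat.mod_lt _ (hk0 l)⟩ with hxls
  set εs : (a : V ⊕ H.Facets) → Fin (e a) :=
    fun a => ⟨(xv x).val % e a, Nat.mod_lt _ (he0 a)⟩ with hεs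
  have main : (∑ xl, ∑ ε, (if Cond xl ε then (1:ℝ) else 0) * (1/2)) = Pcorr c x y xv := by
    by_cases hv : (xv x).val = (xv y).val
    · -- the correlated case : exactly one configuration contributes
      have hja0 : (jointVal c k xv xls a₀).val = (xv x).val := by
        rw [hjall]
        have : (fun l => (xls l).val) = fun l => (xv x).val % k l := rfl
        rw [this]
        exact ha₀elim xv hv
      have hCs : Cond xls εs := by
        intro a
        apply Fin.val_injective
        rw [hval_f]
        by_cases ha : a = a₀
        · subst ha
          rw [if_pos rfl, hja0]
          have hea : e a = 2 := if_pos rfl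
          have hεsa : (εs a).val = (xv x).val % e a := rfl
          have hma : Sum.elim c k a = 2 := hm2
          rw [hεsa, hea, hma]
          omega
        · rw [if_neg ha, hja0, hjall]
          cases a with
          | inl v =>
            simp only [Sum.elim_inl]
            by_cases hvx : v = x
            · rw [hvx]
              exact (Nat.mod_eq_of_lt (xv x).isLt).symm
            by_cases hvy : v = y
            · rw [hvy]
              have h2 : (xv x).val % c y = (xv x).val := by rw [hcy]; omega
              rw [h2]; exact hv.symm
            · have hcv1 : c v = 1 := hc1 v hvx hvy
              have h1 : (xv v).val < c v := (xv v).isLt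
              have h2 : (xv x).val % c v = 0 := by rw [hcv1]; omega
              rw [h2]; omega
          | inr l =>
            simp only [Sum.elim_inr]
            exact rfl
      have huniq : ∀ xl ε, Cond xl ε → xl = xls ∧ ε = εs := by
        intro xl ε hC
        have hjv := (hCval xl ε hC).1
        have hCa0 := congrArg Fin.val (hC a₀)
        rw [hval_f, if_pos rfl] at hCa0
        have hmm2 : (ε a₀).val % Sum.elim c k a₀ = (ε a₀).val % 2 := by rw [hm2]
        rw [hmm2] at hCa0
        constructor
        · funext l
          by_cases hla : (Sum.inr l : V ⊕ H.Facets) = a₀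
          · subst hla
            apply Fin.val_injective
            have h2 : k l = 2 := hm2
            have hj : (jointVal c k xv xl (Sum.inr l)).val = (xl l).val := rfl
            have hxlsl : (xls l).val = (xv x).val % k l := rfl
            have h3 : (xv x).val % k l = (xv x).val := by rw [h2]; omega
            rw [hxlsl, h3]
            omega
          · exact fin_one_eq (hk1 l hla) _ _
        · funext a
          by_cases ha : a = a₀
          · subst ha
            apply Fin.val_injective
            have hea : e a = 2 := if_pos rfl
            have hεsa : (εs a).val = (xv x).val % e a := rfl
            have h4 : (xv x).val % e a = (xv x).val := by rw [hea]; omega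
            have hlt : (ε a).val < e a := (ε a).isLt
            rw [hεsa, h4]
            omega
          · exact fin_one_eq (if_neg ha) _ _
      rw [Finset.sum_eq_single xls (fun xl _ hne => Finset.sum_eq_zero fun ε _ => by
          rw [if_neg fun hC => hne (huniq xl ε hC).1, zero_mul])
        (fun hmem => absurd (Finset.mem_univ _) hmem)]
      rw [Finset.sum_eq_single εs (fun ε _ hne => by
          rw [if_neg fun hC => hne (huniq xls ε hC).2, zero_mul])
        (fun hmem => absurd (Finset.mem_univ _) hmem)]
      rw [if_pos hCs, one_mul]
      unfold Pcorr
      rw [if_pos hv]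
    · -- the uncorrelated case : nothing contributes
      rw [Finset.sum_eq_zero (fun xl _ => Finset.sum_eq_zero fun ε _ => by
        rw [if_neg fun hC => hv (((hCval xl ε hC).1).symm.trans (hCval xl ε hC).2), zero_mul])]
      unfold Pcorr
      rw [if_neg hv]
  calc Pcorr c x y xv
      = ∑ xl, ∑ ε, (if Cond xl ε then (1:ℝ) else 0) * (1/2) := main.symm
    _ = ∑ xl, ∑ ε, ∏ a,
        (if jointVal c k xv xl a = f a (jointVal c k xv xl) (ε a) then (1:ℝ) else 0)
          * PE a (ε a) :=
      Finset.sum_congr rfl fun xl _ => Finset.sum_congr rfl fun ε _ => (hterm xl ε).symm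

end Statement11Realize
section Statement11NonRealize

variable {V : Type} [Fintype V] [DecidableEq V]

lemma nonrealize (G : mDAG V) (x y : V) (hxy : x ≠ y) (hsk : ¬ G.skelAdj x y)
    (c : V → ℕ) (hcx : c x = 2) (hcy : c y = 2) (hc1 : ∀ v, v ≠ x → v ≠ y → c v = 1) :
    ¬ G.Realizable c (Pcorr c x y) := by
  classical
  have hc0 : ∀ v, 0 < c v := by
    intro v
    by_cases h1 : v = x
    · rw [h1, hcx]; omega
    by_cases h2 : v = y
    · rw [h2, hcy]; omega
    rw [hc1 v h1 h2]; omega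
  rintro ⟨hdist, k, e, PE, f, hPE, hloc, hsum⟩
  have hnxy : ¬ G.edge x y := fun hE => hsk (Or.inl hE)
  have hnyx : ¬ G.edge y x := fun hE => hsk (Or.inr (Or.inl hE))
  have hfacxy : ∀ l : G.Facets, ¬ (x ∈ l.1 ∧ y ∈ l.1) := fun l hl =>
    hsk (Or.inr (Or.inr ⟨l.1, l.2.1, hl.1, hl.2⟩))
  have he0 : ∀ a, 0 < e a := by
    intro a
    rcases Nat.eq_zero_or_pos (e a) with h0 | h
    · exfalso
      haveI : IsEmpty (Fin (e a)) := by rw [h0]; infer_instance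
      have h1 := (hPE a).2
      rw [Finset.univ_eq_empty, Finset.sum_empty] at h1
      norm_num at h1
    · exact h
  have hk0 : ∀ l : G.Facets, 0 < k l := by
    intro l
    rcases Nat.eq_zero_or_pos (k l) with h0 | h
    · exfalso
      haveI : IsEmpty ((l' : G.Facets) → Fin (k l')) :=
        ⟨fun g => by have := (g l).isLt; omega⟩
      have h1 : ∑ xv : (v : V) → Fin (c v), Pcorr c x y xv = 0 :=
        Finset.sum_eq_zero fun xv _ => by
          rw [hsum xv, Finset.univ_eq_empty, Finset.sum_empty]
      rw [hdist.2] at h1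
      norm_num at h1
    · exact h
  set xvd : (v : V) → Fin (c v) := fun v => ⟨0, hc0 v⟩ with hxvd
  set xld : (l : G.Facets) → Fin (k l) := fun l => ⟨0, hk0 l⟩ with hxld
  have hnopar : ∀ (l : G.Facets) (b), ¬ G.canon.edge b (Sum.inr l) := by
    intro l b hb; cases b <;> exact hb
  set F : (l : G.Facets) → Fin (e (Sum.inr l)) → Fin (k l) :=
    fun l t => f (Sum.inr l) (jointVal c k xvd xld) t with hF_def
  have hF : ∀ (l : G.Facets) (g) (t), f (Sum.inr l) g t = F l t := fun l g t =>
    hloc _ _ _ _ (fun b hb => absurd hb (hnopar l b))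
  have hparx : ∀ b, G.canon.edge b (Sum.inl x) →
      (∃ u, b = Sum.inl u ∧ u ≠ x ∧ u ≠ y) ∨ (∃ l, b = Sum.inr l ∧ x ∈ l.1) := by
    intro b hb
    cases b with
    | inl u =>
      left
      exact ⟨u, rfl, fun hh => G.no_self_edge x (hh ▸ hb), fun hh => hnyx (hh ▸ hb)⟩
    | inr l => right; exact ⟨l, rfl, hb⟩
  have hpary : ∀ b, G.canon.edge b (Sum.inl y) →
      (∃ u, b = Sum.inl u ∧ u ≠ x ∧ u ≠ y) ∨ (∃ l, b = Sum.inr l ∧ y ∈ l.1) := by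
    intro b hb
    cases b with
    | inl u =>
      left
      exact ⟨u, rfl, fun hh => hnxy (hh ▸ hb), fun hh => G.no_self_edge y (hh ▸ hb)⟩
    | inr l => right; exact ⟨l, rfl, hb⟩
  set Φ : ((a : V ⊕ G.Facets) → Fin (e a)) → Fin (c x) :=
    fun ε => f (Sum.inl x) (jointVal c k xvd (fun l => F l (ε (Sum.inr l))))
      (ε (Sum.inl x)) with hΦ_def
  set Ψ : ((a : V ⊕ G.Facets) → Fin (e a)) → Fin (c y) :=
    fun ε => f (Sum.inl y) (jointVal c k xvd (fun l => F l (ε (Sum.inr l))))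
      (ε (Sum.inl y)) with hΨ_def
  have hΦ : ∀ (xv : (v : V) → Fin (c v)) (xl) (ε : (a : V ⊕ G.Facets) → Fin (e a)),
      (∀ l : G.Facets, x ∈ l.1 → xl l = F l (ε (Sum.inr l))) →
      f (Sum.inl x) (jointVal c k xv xl) (ε (Sum.inl x)) = Φ ε := by
    intro xv xl ε hagree
    apply hloc
    intro b hb
    rcases hparx b hb with ⟨u, rfl, hux, huy⟩ | ⟨l, rfl, hxl⟩
    · exact fin_one_eq (hc1 u hux huy) _ _
    · exact hagree l hxl
  have hΨ : ∀ (xv : (v : V) → Fin (c v)) (xl) (ε : (a : V ⊕ G.Facets) → Fin (e a)),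
      (∀ l : G.Facets, y ∈ l.1 → xl l = F l (ε (Sum.inr l))) →
      f (Sum.inl y) (jointVal c k xv xl) (ε (Sum.inl y)) = Ψ ε := by
    intro xv xl ε hagree
    apply hloc
    intro b hb
    rcases hpary b hb with ⟨u, rfl, hux, huy⟩ | ⟨l, rfl, hyl⟩
    · exact fin_one_eq (hc1 u hux huy) _ _
    · exact hagree l hyl
  have hΦdep : ∀ ε ε', (∀ a, (a = Sum.inl x ∨ ∃ l, a = Sum.inr l ∧ x ∈ l.1) → ε a = ε' a) →
      Φ ε = Φ ε' := by
    intro ε ε' hag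
    have hu1 : Φ ε = f (Sum.inl x) (jointVal c k xvd (fun l => F l (ε (Sum.inr l))))
        (ε (Sum.inl x)) := rfl
    have hu2 : Φ ε' = f (Sum.inl x) (jointVal c k xvd (fun l => F l (ε' (Sum.inr l))))
        (ε' (Sum.inl x)) := rfl
    rw [hu1, hu2, hag (Sum.inl x) (Or.inl rfl)]
    apply hloc
    intro b hb
    rcases hparx b hb with ⟨u, rfl, hux, huy⟩ | ⟨l, rfl, hxl⟩
    · rfl
    · exact congrArg (F l) (hag _ (Or.inr ⟨l, rfl, hxl⟩))
  have hΨdep : ∀ ε ε', (∀ a, (a = Sum.inl y ∨ ∃ l, a = Sum.inr l ∧ y ∈ l.1) → ε a = ε' a) →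
      Ψ ε = Ψ ε' := by
    intro ε ε' hag
    have hu1 : Ψ ε = f (Sum.inl y) (jointVal c k xvd (fun l => F l (ε (Sum.inr l))))
        (ε (Sum.inl y)) := rfl
    have hu2 : Ψ ε' = f (Sum.inl y) (jointVal c k xvd (fun l => F l (ε' (Sum.inr l))))
        (ε' (Sum.inl y)) := rfl
    rw [hu1, hu2, hag (Sum.inl y) (Or.inl rfl)]
    apply hloc
    intro b hb
    rcases hpary b hb with ⟨u, rfl, hux, huy⟩ | ⟨l, rfl, hyl⟩
    · rfl
    · exact congrArg (F l) (hag _ (Or.inr ⟨l, rfl, hyl⟩))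
  have step1 : ∀ xv : (v : V) → Fin (c v), Pcorr c x y xv
      = ∑ ε : (a : V ⊕ G.Facets) → Fin (e a),
          (if xv x = Φ ε then (1:ℝ) else 0) * (if xv y = Ψ ε then (1:ℝ) else 0)
            * ∏ a, PE a (ε a) := by
    intro xv
    rw [hsum xv, Finset.sum_comm]
    apply Finset.sum_congr rfl
    intro ε _
    have hterm : ∀ xl : (l : G.Facets) → Fin (k l),
        (∏ a, (if jointVal c k xv xl a = f a (jointVal c k xv xl) (ε a) then (1:ℝ) else 0)
          * PE a (ε a))
        = (if (∀ a, jointVal c k xv xl a = f a (jointVal c k xv xl) (ε a)) then (1:ℝ) else 0)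
            * ∏ a, PE a (ε a) := by
      intro xl
      rw [Finset.prod_mul_distrib, Fintype.prod_boole]
    rw [Finset.sum_congr rfl fun xl _ => hterm xl]
    set xle : (l : G.Facets) → Fin (k l) := fun l => F l (ε (Sum.inr l)) with hxle
    have hcollapse : (∑ xl : (l : G.Facets) → Fin (k l),
        (if (∀ a, jointVal c k xv xl a = f a (jointVal c k xv xl) (ε a)) then (1:ℝ) else 0)
          * ∏ a, PE a (ε a))
        = (if (∀ a, jointVal c k xv xle a = f a (jointVal c k xv xle) (ε a)) then (1:ℝ) else 0)
          * ∏ a, PE a (ε a) := by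
      apply Finset.sum_eq_single
      · intro xl _ hne
        rw [if_neg, zero_mul]
        intro hC
        apply hne
        funext l
        have h1 := hC (Sum.inr l)
        rw [hF] at h1
        exact h1
      · exact fun hmem => absurd (Finset.mem_univ _) hmem
    rw [hcollapse]
    have hiff : (∀ a, jointVal c k xv xle a = f a (jointVal c k xv xle) (ε a))
        ↔ (xv x = Φ ε ∧ xv y = Ψ ε) := by
      constructor
      · intro hC
        constructor
        · have h1 := hC (Sum.inl x)
          rw [hΦ xv xle ε (fun l _ => rfl)] at h1
          exact h1
        · have h1 := hC (Sum.inl y)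
          rw [hΨ xv xle ε (fun l _ => rfl)] at h1
          exact h1
      · rintro ⟨h1, h2⟩ a
        cases a with
        | inl v =>
          by_cases hvx : v = x
          · subst hvx
            rw [hΦ xv xle ε (fun l _ => rfl)]
            exact h1
          by_cases hvy : v = y
          · subst hvy
            rw [hΨ xv xle ε (fun l _ => rfl)]
            exact h2
          · exact fin_one_eq (hc1 v hvx hvy) _ _
        | inr l =>
          show xle l = f (Sum.inr l) (jointVal c k xv xle) (ε (Sum.inr l))
          rw [hF]
    congr 1
    by_cases hcnd : xv x = Φ ε ∧ xv y = Ψ ε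
    · rw [if_pos (hiff.mpr hcnd), if_pos hcnd.1, if_pos hcnd.2]
      norm_num
    · rw [if_neg (fun hC => hcnd (hiff.mp hC))]
      rcases not_and_or.mp hcnd with hng | hng
      · rw [if_neg hng, zero_mul]
      · rw [if_neg hng, mul_zero]
  have hyc : ∀ a : V ⊕ G.Facets, (a = Sum.inl y ∨ ∃ l, a = Sum.inr l ∧ y ∈ l.1) →
      ¬ (a = Sum.inl x ∨ ∃ l, a = Sum.inr l ∧ x ∈ l.1) := by
    rintro a (rfl | ⟨l, rfl, hyl⟩) hp
    · rcases hp with hh | ⟨l, hh, _⟩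
      · exact hxy (Sum.inl.inj hh).symm
      · simp at hh
    · rcases hp with hh | ⟨l', hh, hxl'⟩
      · simp at hh
      · exact hfacxy l ⟨by rw [Sum.inr.inj hh]; exact hxl', hyl⟩
  have hfact : ∀ xv : (v : V) → Fin (c v), Pcorr c x y xv
      = (∑ ε, (if xv x = Φ ε then (1:ℝ) else 0) * ∏ a, PE a (ε a))
        * (∑ ε, (if xv y = Ψ ε then (1:ℝ) else 0) * ∏ a, PE a (ε a)) := by
    intro xv
    rw [step1 xv]
    exact indep_factor e he0 PE (fun a => (hPE a).2)
      (fun a => a = Sum.inl x ∨ ∃ l, a = Sum.inr l ∧ x ∈ l.1)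
      (fun ε => if xv x = Φ ε then (1:ℝ) else 0)
      (fun ε => if xv y = Ψ ε then (1:ℝ) else 0)
      (fun ε ε' hag => congrArg (fun z => if xv x = z then (1:ℝ) else 0) (hΦdep ε ε' hag))
      (fun ε ε' hag => congrArg (fun z => if xv y = z then (1:ℝ) else 0)
        (hΨdep ε ε' (fun a ha => hag a (hyc a ha))))
  set Ax : Fin (c x) → ℝ :=
    fun i => ∑ ε, (if i = Φ ε then (1:ℝ) else 0) * ∏ a, PE a (ε a) with hAx
  set By : Fin (c y) → ℝ :=
    fun j => ∑ ε, (if j = Ψ ε then (1:ℝ) else 0) * ∏ a, PE a (ε a) with hBy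
  have hfact' : ∀ xv : (v : V) → Fin (c v), Pcorr c x y xv = Ax (xv x) * By (xv y) :=
    fun xv => hfact xv
  have hkey : ∀ i j : Fin 2, (if i.val = j.val then (1:ℝ)/2 else 0)
      = Ax (ptFun c hc0 x y i j x) * By (ptFun c hc0 x y i j y) := by
    intro i j
    rw [← Pcorr_ptFun c hc0 x y hxy hcx hcy i j]
    exact hfact' _
  have hxpt : ∀ i j j' : Fin 2, ptFun c hc0 x y i j x = ptFun c hc0 x y i j' x := by
    intro i j j'
    apply Fin.val_injective
    rw [ptFun_x c hc0 x y hcx, ptFun_x c hc0 x y hcx]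
  have hypt : ∀ i i' j : Fin 2, ptFun c hc0 x y i j y = ptFun c hc0 x y i' j y := by
    intro i i' j
    apply Fin.val_injective
    rw [ptFun_y c hc0 x y hxy hcy, ptFun_y c hc0 x y hxy hcy]
  have e00 := hkey 0 0
  have e11 := hkey 1 1
  have e01 := hkey 0 1
  have e10 := hkey 1 0
  rw [hxpt 0 1 0, hypt 0 1 1] at e01
  rw [hxpt 1 0 1, hypt 1 0 0] at e10
  norm_num at e00 e11 e01 e10
  rcases e01 with h1 | h1
  · rw [h1, zero_mul] at e00
    norm_num at e00
  · rw [h1, mul_zero] at e11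
    norm_num at e11

end Statement11NonRealize
/-- (Comparison of skeletons.)  Let `G` and `G'` be two mDAGs on the
same node set.  If some undirected edge `x — y` is present in the skeleton of `G'` but
not in the skeleton of `G`, then `G` does not observationally dominate `G'`: for some
assignment of finite cardinalities, some distribution realizable by `G'` is not
realizable by `G`. -/
theorem comparison_of_skeletons
    {V : Type} [Fintype V] [DecidableEq V] (G G' : mDAG V) (x y : V)
    (h' : G'.skelAdj x y) (h : ¬ G.skelAdj x y) :
    ∃ (c : V → ℕ) (P : ((v : V) → Fin (c v)) → ℝ),
      G'.Realizable c P ∧ ¬ G.Realizable c P := by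
  classical
  have hxy : x ≠ y := by
    rintro rfl
    exact h (Or.inr (Or.inr ⟨{x}, G.singleton_mem x, Finset.mem_singleton_self x,
      Finset.mem_singleton_self x⟩))
  set c : V → ℕ := fun v => if v = x then 2 else if v = y then 2 else 1 with hc
  have hcx : c x = 2 := by rw [hc]; simp
  have hcy : c y = 2 := by rw [hc]; simp [Ne.symm hxy]
  have hc1 : ∀ v, v ≠ x → v ≠ y → c v = 1 := by
    intro v h1 h2; rw [hc]; simp [h1, h2]
  refine ⟨c, Pcorr c x y, ?_, nonrealize G x y hxy h c hcx hcy hc1⟩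
  rcases h' with hE | hE | ⟨A, hA, hxA, hyA⟩
  · exact realize_src G' x y hxy c hcx hcy hc1 (fun _ => 1) (Sum.inl x) hcx
      (fun _ _ => rfl) (Or.inl rfl) (Or.inr hE)
  · exact realize_src G' x y hxy c hcx hcy hc1 (fun _ => 1) (Sum.inl y) hcy
      (fun _ _ => rfl) (Or.inr hE) (Or.inl rfl)
  · obtain ⟨M, hM, hAM⟩ := G'.exists_facet_superset hA
    exact realize_src G' x y hxy c hcx hcy hc1
      (fun l => if l = ⟨M, hM⟩ then 2 else 1) (Sum.inr ⟨M, hM⟩)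
      (if_pos rfl) (fun l hl => if_neg fun hh => hl (by rw [hh]))
      (Or.inr (hAM hxA)) (Or.inr (hAM hyA))
end

section
/- Let the Evans mDAG on nodes {a,b,c} have directed edges a→b and a→c and simplicial complex generated by the facets {a,b} and {a,c}; let Instrumental BAC be the mDAG with directed edges b→a and a→c and simplicial complex generated by the facet {a,c}; and let Instrumental CAB be the mDAG with directed edges c→a and a→b and simplicial complex generated by the facet {a,b}. Take all three visible variables binary and let S = {(0,0,0), (0,1,1), (1,0,0)} be a set of joint outcomes of (X_a, X_b, X_c). Then: (i) some distribution realizable by the Evans mDAG at binary cardinalities has support exactly S; and (ii) no distribution with support S is realizable by Instrumental BAC, and no distribution with support S is realizable by Instrumental CAB. Consequently, neither Instrumental BAC nor Instrumental CAB observationally dominates the Evans mDAG. -/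
open scoped Classical

/-! ### Statement 19: the Evans mDAG versus the two instrumental mDAGs -/

/-- The Evans mDAG on nodes `{a, b, c} = {0, 1, 2}`: directed edges `a → b` and
`a → c`, and simplicial complex generated by the facets `{a, b}` and `{a, c}`. -/
def evansMDAG : mDAG (Fin 3) where
  edge a b := (a = 0 ∧ b = 1) ∨ (a = 0 ∧ b = 2)
  acyclic := ⟨Fin.val, by decide⟩
  faces := {∅, {0}, {1}, {2}, {0, 1}, {0, 2}}
  singleton_mem := by decide
  down_closed := by decide

/-- The Instrumental BAC mDAG: directed edges `b → a` and `a → c`, and simplicial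
complex generated by the facet `{a, c}`. -/
def instBAC : mDAG (Fin 3) where
  edge x y := (x = 1 ∧ y = 0) ∨ (x = 0 ∧ y = 2)
  acyclic := ⟨![1, 0, 2], by decide⟩
  faces := {∅, {0}, {1}, {2}, {0, 2}}
  singleton_mem := by decide
  down_closed := by decide

/-- The Instrumental CAB mDAG: directed edges `c → a` and `a → b`, and simplicial
complex generated by the facet `{a, b}`. -/
def instCAB : mDAG (Fin 3) where
  edge x y := (x = 2 ∧ y = 0) ∨ (x = 0 ∧ y = 1)
  acyclic := ⟨![1, 2, 0], by decide⟩
  faces := {∅, {0}, {1}, {2}, {0, 1}}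
  singleton_mem := by decide
  down_closed := by decide

/-- The support `S = {(0,0,0), (0,1,1), (1,0,0)}` of joint outcomes of
`(X_a, X_b, X_c)`, all variables binary. -/
def evansSupport : Set ((v : Fin 3) → Fin 2) :=
  {![0, 0, 0], ![0, 1, 1], ![1, 0, 0]}
lemma evF01 : evansMDAG.IsFacet {0,1} :=
  ⟨by decide, by decide⟩
lemma evF02 : evansMDAG.IsFacet {0,2} :=
  ⟨by decide, by decide⟩
lemma evClass : ∀ A : Finset (Fin 3), A ∈ evansMDAG.faces →
    (∀ B ∈ evansMDAG.faces, A ⊆ B → A = B) → A = {0,1} ∨ A = {0,2} := by decide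
lemma bacF1 : instBAC.IsFacet {1} := ⟨by decide, by decide⟩
lemma bacF02 : instBAC.IsFacet {0,2} := ⟨by decide, by decide⟩
lemma bacClass : ∀ A : Finset (Fin 3), A ∈ instBAC.faces →
    (∀ B ∈ instBAC.faces, A ⊆ B → A = B) → A = {1} ∨ A = {0,2} := by decide
lemma cabF2 : instCAB.IsFacet {2} := ⟨by decide, by decide⟩
lemma cabF01 : instCAB.IsFacet {0,1} := ⟨by decide, by decide⟩
lemma cabClass : ∀ A : Finset (Fin 3), A ∈ instCAB.faces →
    (∀ B ∈ instCAB.faces, A ⊆ B → A = B) → A = {2} ∨ A = {0,1} := by decide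
section extraction
set_option linter.unusedSectionVars false
variable {V L : Type} [Fintype V] [Fintype L] [DecidableEq V] [DecidableEq L]
variable (c : V → ℕ) (k : L → ℕ) (e : V ⊕ L → ℕ)
variable (PE : (a : V ⊕ L) → Fin (e a) → ℝ)
variable (f : (a : V ⊕ L) → ((b : V ⊕ L) → Fin (Sum.elim c k b)) → Fin (e a) →
  Fin (Sum.elim c k a))

lemma model_term_nonneg (hPE : ∀ a x, 0 ≤ PE a x) (xv : (v : V) → Fin (c v))
    (xl : (l : L) → Fin (k l)) (ε : (a : V ⊕ L) → Fin (e a)) :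
    0 ≤ ∏ a : V ⊕ L,
      (if jointVal c k xv xl a = f a (jointVal c k xv xl) (ε a) then (1:ℝ) else 0)
        * PE a (ε a) :=
  Finset.prod_nonneg fun a _ => mul_nonneg (by split <;> norm_num) (hPE a _)

lemma model_exists_consistent (hPE : ∀ a x, 0 ≤ PE a x) (xv : (v : V) → Fin (c v))
    (h : 0 < ∑ xl : (l : L) → Fin (k l), ∑ ε : (a : V ⊕ L) → Fin (e a), ∏ a : V ⊕ L,
      (if jointVal c k xv xl a = f a (jointVal c k xv xl) (ε a) then (1:ℝ) else 0)
        * PE a (ε a)) :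
    ∃ (xl : (l : L) → Fin (k l)) (ε : (a : V ⊕ L) → Fin (e a)),
      (∀ a, jointVal c k xv xl a = f a (jointVal c k xv xl) (ε a)) ∧
      (∀ a, 0 < PE a (ε a)) := by
  obtain ⟨xl, -, hxl⟩ := Finset.exists_lt_of_sum_lt
    (f := fun _ : (l : L) → Fin (k l) => (0:ℝ)) (by simpa only [Finset.sum_const, smul_zero] using h)
  obtain ⟨ε, -, hε⟩ := Finset.exists_lt_of_sum_lt
    (f := fun _ : (a : V ⊕ L) → Fin (e a) => (0:ℝ)) (by simpa only [Finset.sum_const, smul_zero] using hxl)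
  have key : ∀ a, ¬ ((if jointVal c k xv xl a = f a (jointVal c k xv xl) (ε a)
      then (1:ℝ) else 0) * PE a (ε a) = 0) := by
    intro a h0'
    rw [Finset.prod_eq_zero (Finset.mem_univ a) h0'] at hε
    exact lt_irrefl 0 hε
  refine ⟨xl, ε, fun a => ?_, fun a => ?_⟩
  · by_contra hne
    exact key a (by rw [if_neg hne, zero_mul])
  · rcases (hPE a (ε a)).lt_or_eq with h' | h'
    · exact h'
    · exact absurd (by rw [← h', mul_zero]) (key a)

lemma model_sum_pos (hPE : ∀ a x, 0 ≤ PE a x) (xv : (v : V) → Fin (c v))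
    (xl : (l : L) → Fin (k l)) (ε : (a : V ⊕ L) → Fin (e a))
    (hcons : ∀ a, jointVal c k xv xl a = f a (jointVal c k xv xl) (ε a))
    (hpos : ∀ a, 0 < PE a (ε a)) :
    0 < ∑ xl : (l : L) → Fin (k l), ∑ ε : (a : V ⊕ L) → Fin (e a), ∏ a : V ⊕ L,
      (if jointVal c k xv xl a = f a (jointVal c k xv xl) (ε a) then (1:ℝ) else 0)
        * PE a (ε a) := by
  refine Finset.sum_pos'
    (fun x _ => Finset.sum_nonneg fun y _ => model_term_nonneg c k e PE f hPE xv x y)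
    ⟨xl, Finset.mem_univ _, Finset.sum_pos'
      (fun y _ => model_term_nonneg c k e PE f hPE xv xl y)
      ⟨ε, Finset.mem_univ _, Finset.prod_pos fun a _ => ?_⟩⟩
  rw [if_pos (hcons a), one_mul]
  exact hpos a

end extraction
noncomputable def B1 : instBAC.Facets := ⟨{1}, bacF1⟩
noncomputable def B02 : instBAC.Facets := ⟨{0,2}, bacF02⟩

lemma hclB : ∀ A : instBAC.Facets, A = B1 ∨ A = B02 := fun A => by
  rcases bacClass A.1 A.2.1 A.2.2 with h | h
  · exact Or.inl (Subtype.ext h)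
  · exact Or.inr (Subtype.ext h)

lemma B1_ne_B02 : B1 ≠ B02 := by
  intro h
  have := congrArg Subtype.val h
  exact absurd this (by decide)

lemma bac_not_realizable (P : ((v : Fin 3) → Fin 2) → ℝ)
    (hsupp : ∀ x, x ∈ evansSupport ↔ 0 < P x) :
    ¬ instBAC.Realizable (fun _ => 2) P := by
  rintro ⟨-, k, e, PE, f, hPE, hloc, hsum⟩
  have hPEnn : ∀ a x, 0 ≤ PE a x := fun a x => (hPE a).1 x
  -- extract configurations for the two support points
  have h011 : 0 < P ![0,1,1] := (hsupp _).1 (by right; left; rfl)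
  have h000 : 0 < P ![0,0,0] := (hsupp _).1 (by left; rfl)
  rw [hsum _] at h011 h000
  obtain ⟨xl1, ε1, hc1, hp1⟩ := model_exists_consistent _ k e PE f hPEnn _ h011
  obtain ⟨xl0, ε0, hc0, hp0⟩ := model_exists_consistent _ k e PE f hPEnn _ h000
  -- the hybrid configuration
  set xls : (l : instBAC.Facets) → Fin (k l) :=
    fun A => if A = B1 then xl1 A else xl0 A with hxls
  set εs : (a : Fin 3 ⊕ instBAC.Facets) → Fin (e a) :=
    fun a => if a = Sum.inl 1 ∨ a = Sum.inr B1 then ε1 a else ε0 a with hεs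
  set gmid := jointVal (fun _ => 2) k ![0,1,0] xls with hgmid
  set α := f (Sum.inl 0) gmid (ε0 (Sum.inl 0)) with hα
  set g2 := jointVal (fun _ => 2) k ![α,1,0] xls with hg2
  set γ := f (Sum.inl 2) g2 (ε0 (Sum.inl 2)) with hγ
  set xstar : (v : Fin 3) → Fin 2 := ![α,1,γ] with hxstar
  set gstar := jointVal (fun _ => 2) k xstar xls with hgstar
  set g1full := jointVal (fun _ => 2) k ![0,1,1] xl1 with hg1full
  set g0full := jointVal (fun _ => 2) k ![0,0,0] xl0 with hg0full
  -- εs values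
  have hεs0 : εs (Sum.inl 0) = ε0 (Sum.inl 0) := by
    rw [hεs]; exact if_neg (by simp)
  have hεs1 : εs (Sum.inl 1) = ε1 (Sum.inl 1) := by
    rw [hεs]; exact if_pos (Or.inl rfl)
  have hεs2 : εs (Sum.inl 2) = ε0 (Sum.inl 2) := by
    rw [hεs]; exact if_neg (by simp)
  have hεsB1 : εs (Sum.inr B1) = ε1 (Sum.inr B1) := by
    rw [hεs]; exact if_pos (Or.inr rfl)
  have hεsB02 : εs (Sum.inr B02) = ε0 (Sum.inr B02) := by
    rw [hεs]; exact if_neg (by simp [B1_ne_B02.symm])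
  have hxlsB1 : xls B1 = xl1 B1 := by rw [hxls]; exact if_pos rfl
  have hxlsB02 : xls B02 = xl0 B02 := by rw [hxls]; exact if_neg B1_ne_B02.symm
  -- no node has a latent node as a parent... latents have no parents
  have hnopar : ∀ (A : instBAC.Facets) (b : Fin 3 ⊕ instBAC.Facets),
      ¬ instBAC.canon.edge b (Sum.inr A) := by
    rintro A (u | A') h <;> exact h
  -- consistency of the hybrid
  have hconsS : ∀ a, jointVal (fun _ => 2) k xstar xls a = f a gstar (εs a) := by
    rintro (v | A)
    · fin_cases v
      · -- node 0
        show α = f (Sum.inl 0) gstar (εs (Sum.inl 0))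
        rw [hεs0, hα]
        refine hloc (Sum.inl 0) gmid gstar _ ?_
        rintro (u | A') hb
        · have hb' : instBAC.edge u 0 := hb
          rcases hb' with ⟨h1, -⟩ | ⟨-, h2⟩
          · subst h1; rfl
          · exact absurd h2 (by decide)
        · rfl
      · -- node 1
        show (1 : Fin 2) = f (Sum.inl 1) gstar (εs (Sum.inl 1))
        rw [hεs1]
        have hagree : ∀ b, instBAC.canon.edge b (Sum.inl 1) → gstar b = g1full b := by
          rintro (u | A') hb
          · have hb' : instBAC.edge u 1 := hb
            rcases hb' with ⟨-, h2⟩ | ⟨-, h2⟩ <;> exact absurd h2 (by decide)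
          · have hb' : (1 : Fin 3) ∈ A'.1 := hb
            rcases hclB A' with rfl | rfl
            · show xls B1 = xl1 B1
              exact hxlsB1
            · exact absurd hb' (by decide)
        rw [hloc (Sum.inl 1) gstar g1full _ hagree]
        exact hc1 (Sum.inl 1)
      · -- node 2
        show γ = f (Sum.inl 2) gstar (εs (Sum.inl 2))
        rw [hεs2, hγ]
        refine hloc (Sum.inl 2) g2 gstar _ ?_
        rintro (u | A') hb
        · have hb' : instBAC.edge u 2 := hb
          rcases hb' with ⟨-, h2⟩ | ⟨h1, -⟩
          · exact absurd h2 (by decide)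
          · subst h1; rfl
        · rfl
    · -- latent nodes
      rcases hclB A with rfl | rfl
      · show xls B1 = f (Sum.inr B1) gstar (εs (Sum.inr B1))
        rw [hεsB1, hxlsB1,
          hloc (Sum.inr B1) gstar g1full _ (fun b hb => absurd hb (hnopar B1 b))]
        exact hc1 (Sum.inr B1)
      · show xls B02 = f (Sum.inr B02) gstar (εs (Sum.inr B02))
        rw [hεsB02, hxlsB02,
          hloc (Sum.inr B02) gstar g0full _ (fun b hb => absurd hb (hnopar B02 b))]
        exact hc0 (Sum.inr B02)
  have hposS : ∀ a, 0 < PE a (εs a) := by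
    intro a
    rw [hεs]
    dsimp only
    split
    · exact hp1 a
    · exact hp0 a
  have hPx : 0 < P xstar := by
    rw [hsum xstar]
    exact model_sum_pos _ k e PE f hPEnn xstar xls εs hconsS hposS
  -- xstar must be in the support, hence equals ![0,1,1]
  have hmem := (hsupp xstar).2 hPx
  rcases hmem with h | h | h
  · exact absurd (congrFun h 1) (by simp [hxstar])
  · -- xstar = ![0,1,1] : extract α = 0 and γ = 1
    have hα0 : α = (0 : Fin 2) := by
      have := congrFun h 0; simpa [hxstar] using this
    have hγ1 : γ = (1 : Fin 2) := by
      have := congrFun h 2; simpa [hxstar] using this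
    -- contradiction with configuration 0 at node 2
    have h02 : (0 : Fin 2) = f (Sum.inl 2) g0full (ε0 (Sum.inl 2)) := hc0 (Sum.inl 2)
    have heq : f (Sum.inl 2) g2 (ε0 (Sum.inl 2)) = f (Sum.inl 2) g0full (ε0 (Sum.inl 2)) := by
      refine hloc (Sum.inl 2) g2 g0full _ ?_
      rintro (u | A') hb
      · have hb' : instBAC.edge u 2 := hb
        rcases hb' with ⟨-, h2⟩ | ⟨h1, -⟩
        · exact absurd h2 (by decide)
        · subst h1
          show α = (0 : Fin 2)
          exact hα0
      · have hb' : (2 : Fin 3) ∈ A'.1 := hb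
        rcases hclB A' with rfl | rfl
        · exact absurd hb' (by decide)
        · exact hxlsB02
    rw [← hγ, hγ1] at heq
    rw [← heq] at h02
    exact absurd (show (0:Fin 2) = 1 from h02) (by decide)
  · exact absurd (congrFun h 1) (by simp [hxstar])
noncomputable def C2 : instCAB.Facets := ⟨{2}, cabF2⟩
noncomputable def C01 : instCAB.Facets := ⟨{0,1}, cabF01⟩

lemma hclC : ∀ A : instCAB.Facets, A = C2 ∨ A = C01 := fun A => by
  rcases cabClass A.1 A.2.1 A.2.2 with h | h
  · exact Or.inl (Subtype.ext h)
  · exact Or.inr (Subtype.ext h)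

lemma C2_ne_C01 : C2 ≠ C01 := by
  intro h
  have := congrArg Subtype.val h
  exact absurd this (by decide)

lemma cab_not_realizable (P : ((v : Fin 3) → Fin 2) → ℝ)
    (hsupp : ∀ x, x ∈ evansSupport ↔ 0 < P x) :
    ¬ instCAB.Realizable (fun _ => 2) P := by
  rintro ⟨-, k, e, PE, f, hPE, hloc, hsum⟩
  have hPEnn : ∀ a x, 0 ≤ PE a x := fun a x => (hPE a).1 x
  have h011 : 0 < P ![0,1,1] := (hsupp _).1 (by right; left; rfl)
  have h000 : 0 < P ![0,0,0] := (hsupp _).1 (by left; rfl)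
  rw [hsum _] at h011 h000
  obtain ⟨xl1, ε1, hc1, hp1⟩ := model_exists_consistent _ k e PE f hPEnn _ h011
  obtain ⟨xl0, ε0, hc0, hp0⟩ := model_exists_consistent _ k e PE f hPEnn _ h000
  set xls : (l : instCAB.Facets) → Fin (k l) :=
    fun A => if A = C2 then xl1 A else xl0 A with hxls
  set εs : (a : Fin 3 ⊕ instCAB.Facets) → Fin (e a) :=
    fun a => if a = Sum.inl 2 ∨ a = Sum.inr C2 then ε1 a else ε0 a with hεs
  set gmid := jointVal (fun _ => 2) k ![0,0,1] xls with hgmid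
  set α := f (Sum.inl 0) gmid (ε0 (Sum.inl 0)) with hα
  set g2 := jointVal (fun _ => 2) k ![α,0,1] xls with hg2
  set β := f (Sum.inl 1) g2 (ε0 (Sum.inl 1)) with hβ
  set xstar : (v : Fin 3) → Fin 2 := ![α,β,1] with hxstar
  set gstar := jointVal (fun _ => 2) k xstar xls with hgstar
  set g1full := jointVal (fun _ => 2) k ![0,1,1] xl1 with hg1full
  set g0full := jointVal (fun _ => 2) k ![0,0,0] xl0 with hg0full
  have hεs0 : εs (Sum.inl 0) = ε0 (Sum.inl 0) := by
    rw [hεs]; exact if_neg (by simp)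
  have hεs1 : εs (Sum.inl 1) = ε0 (Sum.inl 1) := by
    rw [hεs]; exact if_neg (by simp)
  have hεs2 : εs (Sum.inl 2) = ε1 (Sum.inl 2) := by
    rw [hεs]; exact if_pos (Or.inl rfl)
  have hεsC2 : εs (Sum.inr C2) = ε1 (Sum.inr C2) := by
    rw [hεs]; exact if_pos (Or.inr rfl)
  have hεsC01 : εs (Sum.inr C01) = ε0 (Sum.inr C01) := by
    rw [hεs]; exact if_neg (by simp [C2_ne_C01.symm])
  have hxlsC2 : xls C2 = xl1 C2 := by rw [hxls]; exact if_pos rfl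
  have hxlsC01 : xls C01 = xl0 C01 := by rw [hxls]; exact if_neg C2_ne_C01.symm
  have hnopar : ∀ (A : instCAB.Facets) (b : Fin 3 ⊕ instCAB.Facets),
      ¬ instCAB.canon.edge b (Sum.inr A) := by
    rintro A (u | A') h <;> exact h
  have hconsS : ∀ a, jointVal (fun _ => 2) k xstar xls a = f a gstar (εs a) := by
    rintro (v | A)
    · fin_cases v
      · -- node 0
        show α = f (Sum.inl 0) gstar (εs (Sum.inl 0))
        rw [hεs0, hα]
        refine hloc (Sum.inl 0) gmid gstar _ ?_
        rintro (u | A') hb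
        · have hb' : instCAB.edge u 0 := hb
          rcases hb' with ⟨h1, -⟩ | ⟨-, h2⟩
          · subst h1; rfl
          · exact absurd h2 (by decide)
        · rfl
      · -- node 1
        show β = f (Sum.inl 1) gstar (εs (Sum.inl 1))
        rw [hεs1, hβ]
        refine hloc (Sum.inl 1) g2 gstar _ ?_
        rintro (u | A') hb
        · have hb' : instCAB.edge u 1 := hb
          rcases hb' with ⟨-, h2⟩ | ⟨h1, -⟩
          · exact absurd h2 (by decide)
          · subst h1; rfl
        · rfl
      · -- node 2
        show (1 : Fin 2) = f (Sum.inl 2) gstar (εs (Sum.inl 2))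
        rw [hεs2]
        have hagree : ∀ b, instCAB.canon.edge b (Sum.inl 2) → gstar b = g1full b := by
          rintro (u | A') hb
          · have hb' : instCAB.edge u 2 := hb
            rcases hb' with ⟨-, h2⟩ | ⟨-, h2⟩ <;> exact absurd h2 (by decide)
          · have hb' : (2 : Fin 3) ∈ A'.1 := hb
            rcases hclC A' with rfl | rfl
            · exact hxlsC2
            · exact absurd hb' (by decide)
        rw [hloc (Sum.inl 2) gstar g1full _ hagree]
        exact hc1 (Sum.inl 2)
    · rcases hclC A with rfl | rfl
      · show xls C2 = f (Sum.inr C2) gstar (εs (Sum.inr C2))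
        rw [hεsC2, hxlsC2,
          hloc (Sum.inr C2) gstar g1full _ (fun b hb => absurd hb (hnopar C2 b))]
        exact hc1 (Sum.inr C2)
      · show xls C01 = f (Sum.inr C01) gstar (εs (Sum.inr C01))
        rw [hεsC01, hxlsC01,
          hloc (Sum.inr C01) gstar g0full _ (fun b hb => absurd hb (hnopar C01 b))]
        exact hc0 (Sum.inr C01)
  have hposS : ∀ a, 0 < PE a (εs a) := by
    intro a
    rw [hεs]
    dsimp only
    split
    · exact hp1 a
    · exact hp0 a
  have hPx : 0 < P xstar := by
    rw [hsum xstar]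
    exact model_sum_pos _ k e PE f hPEnn xstar xls εs hconsS hposS
  have hmem := (hsupp xstar).2 hPx
  rcases hmem with h | h | h
  · exact absurd (congrFun h 2) (by simp [hxstar])
  · have hα0 : α = (0 : Fin 2) := by
      have := congrFun h 0; simpa [hxstar] using this
    have hβ1 : β = (1 : Fin 2) := by
      have := congrFun h 1; simpa [hxstar] using this
    have h01 : (0 : Fin 2) = f (Sum.inl 1) g0full (ε0 (Sum.inl 1)) := hc0 (Sum.inl 1)
    have heq : f (Sum.inl 1) g2 (ε0 (Sum.inl 1)) = f (Sum.inl 1) g0full (ε0 (Sum.inl 1)) := by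
      refine hloc (Sum.inl 1) g2 g0full _ ?_
      rintro (u | A') hb
      · have hb' : instCAB.edge u 1 := hb
        rcases hb' with ⟨-, h2⟩ | ⟨h1, -⟩
        · exact absurd h2 (by decide)
        · subst h1
          show α = (0 : Fin 2)
          exact hα0
      · have hb' : (1 : Fin 3) ∈ A'.1 := hb
        rcases hclC A' with rfl | rfl
        · exact absurd hb' (by decide)
        · exact hxlsC01
    rw [← hβ, hβ1] at heq
    rw [← heq] at h01
    exact absurd (show (0:Fin 2) = 1 from h01) (by decide)
  · exact absurd (congrFun h 2) (by simp [hxstar])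
noncomputable def F01 : evansMDAG.Facets := ⟨{0,1}, evF01⟩
noncomputable def F02 : evansMDAG.Facets := ⟨{0,2}, evF02⟩

lemma hclE : ∀ A : evansMDAG.Facets, A = F01 ∨ A = F02 := fun A => by
  rcases evClass A.1 A.2.1 A.2.2 with h | h
  · exact Or.inl (Subtype.ext h)
  · exact Or.inr (Subtype.ext h)

lemma F01_ne_F02 : F01 ≠ F02 := by
  intro h
  have := congrArg Subtype.val h
  exact absurd this (by decide)

/-- error-variable cardinalities for the Evans model -/
def eEv : Fin 3 ⊕ evansMDAG.Facets → ℕ := Sum.elim (fun _ => 1) (fun _ => 2)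

/-- error distributions for the Evans model -/
noncomputable def PEev : (a : Fin 3 ⊕ evansMDAG.Facets) → Fin (eEv a) → ℝ :=
  fun a _ => Sum.elim (fun _ => (1:ℝ)) (fun _ => (2:ℝ)⁻¹) a

/-- structural functions for the Evans model -/
noncomputable def fEv : (a : Fin 3 ⊕ evansMDAG.Facets) →
    ((b : Fin 3 ⊕ evansMDAG.Facets) →
      Fin (Sum.elim (fun _ => 2) (fun _ => 2) b)) →
    Fin (eEv a) → Fin (Sum.elim (fun _ => 2) (fun _ => 2) a)
  | Sum.inl v => fun g _ =>
      if v = 0 then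
        (if (g (Sum.inr F01) : Fin 2) = (g (Sum.inr F02) : Fin 2) then (0:Fin 2) else (1:Fin 2))
      else if v = 1 then
        (if (g (Sum.inl 0) : Fin 2) = (0:Fin 2) then (g (Sum.inr F01) : Fin 2) else (0:Fin 2))
      else
        (if (g (Sum.inl 0) : Fin 2) = (0:Fin 2) then (g (Sum.inr F02) : Fin 2) else (0:Fin 2))
  | Sum.inr _ => fun _ ε => ε

/-- the target distribution -/
noncomputable def Pev : ((v : Fin 3) → Fin 2) → ℝ := fun x =>
  (if x = ![0,0,0] then (4:ℝ)⁻¹ else 0) + (if x = ![0,1,1] then (4:ℝ)⁻¹ else 0)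
    + (if x = ![1,0,0] then (2:ℝ)⁻¹ else 0)

lemma Pev_supp : ∀ x, x ∈ evansSupport ↔ 0 < Pev x := by
  intro x
  constructor
  · rintro (rfl | rfl | rfl) <;>
      · simp only [Pev]
        split_ifs <;> simp_all <;> norm_num
  · intro hpos
    by_contra hx
    simp only [evansSupport, Set.mem_insert_iff, Set.mem_singleton_iff] at hx
    push_neg at hx
    obtain ⟨h1, h2, h3⟩ := hx
    simp only [Pev] at hpos
    rw [if_neg h1, if_neg h2, if_neg h3] at hpos
    norm_num at hpos

noncomputable def eL : (Fin 2 × Fin 2) ≃ ((l : evansMDAG.Facets) → Fin 2) where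
  toFun p A := if A = F01 then p.1 else p.2
  invFun g := (g F01, g F02)
  left_inv p := by
    ext
    · simp
    · simp [F01_ne_F02.symm]
  right_inv g := by
    funext A
    rcases hclE A with rfl | rfl
    · simp
    · simp [F01_ne_F02.symm]

noncomputable def eEps : (Fin 2 × Fin 2) ≃ ((a : Fin 3 ⊕ evansMDAG.Facets) → Fin (eEv a)) where
  toFun p := fun a => match a with
    | Sum.inl _ => (0 : Fin 1)
    | Sum.inr A => if A = F01 then p.1 else p.2
  invFun ε := (ε (Sum.inr F01), ε (Sum.inr F02))
  left_inv p := by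
    ext
    · simp
    · simp [F01_ne_F02.symm]
  right_inv ε := by
    funext a
    match a with
    | Sum.inl v =>
      exact Subsingleton.elim (α := Fin 1) _ _
    | Sum.inr A =>
      rcases hclE A with rfl | rfl
      · simp
      · simp [F01_ne_F02.symm]

lemma univFacets : (Finset.univ : Finset evansMDAG.Facets) = {F01, F02} :=
  (Finset.eq_univ_iff_forall.mpr fun A => by
    rcases hclE A with rfl | rfl <;> simp).symm

lemma prodFacets {M : Type} [CommMonoid M] (h : evansMDAG.Facets → M) :
    ∏ A, h A = h F01 * h F02 := by
  rw [univFacets, Finset.prod_insert (by simp [F01_ne_F02]), Finset.prod_singleton]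
lemma fEv0 (g) (ε) : fEv (Sum.inl 0) g ε =
    (if (g (Sum.inr F01) : Fin 2) = (g (Sum.inr F02) : Fin 2) then (0:Fin 2) else 1) := rfl
lemma fEv1 (g) (ε) : fEv (Sum.inl 1) g ε =
    (if (g (Sum.inl 0) : Fin 2) = (0:Fin 2) then (g (Sum.inr F01) : Fin 2) else (0:Fin 2)) := rfl
lemma fEv2 (g) (ε) : fEv (Sum.inl 2) g ε =
    (if (g (Sum.inl 0) : Fin 2) = (0:Fin 2) then (g (Sum.inr F02) : Fin 2) else (0:Fin 2)) := rfl
lemma fEvR (A) (g) (ε) : fEv (Sum.inr A) g ε = ε := rfl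

lemma PEev_dist : ∀ a, IsDist (PEev a) := by
  rintro (v | A)
  · refine ⟨fun x => by norm_num [PEev], ?_⟩
    show ∑ _x : Fin 1, (1:ℝ) = 1
    simp
  · refine ⟨fun x => by norm_num [PEev], ?_⟩
    show ∑ _x : Fin 2, (2:ℝ)⁻¹ = 1
    rw [Finset.sum_const]
    norm_num

lemma fEv_local : ∀ a g g' ε, (∀ b, evansMDAG.canon.edge b a → g b = g' b) →
    fEv a g ε = fEv a g' ε := by
  have e010 : evansMDAG.canon.edge (Sum.inr F01) (Sum.inl 0) := by
    show (0:Fin 3) ∈ ({0,1} : Finset (Fin 3)); decide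
  have e020 : evansMDAG.canon.edge (Sum.inr F02) (Sum.inl 0) := by
    show (0:Fin 3) ∈ ({0,2} : Finset (Fin 3)); decide
  have e011 : evansMDAG.canon.edge (Sum.inr F01) (Sum.inl 1) := by
    show (1:Fin 3) ∈ ({0,1} : Finset (Fin 3)); decide
  have e022 : evansMDAG.canon.edge (Sum.inr F02) (Sum.inl 2) := by
    show (2:Fin 3) ∈ ({0,2} : Finset (Fin 3)); decide
  have e01v : evansMDAG.canon.edge (Sum.inl 0) (Sum.inl 1) := Or.inl ⟨rfl, rfl⟩
  have e02v : evansMDAG.canon.edge (Sum.inl 0) (Sum.inl 2) := Or.inr ⟨rfl, rfl⟩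
  have h3 : ∀ v : Fin 3, v = 0 ∨ v = 1 ∨ v = 2 := by decide
  rintro (v | A) g g' ε h
  · rcases h3 v with rfl | rfl | rfl
    · rw [fEv0, fEv0, h _ e010, h _ e020]
    · rw [fEv1, fEv1, h _ e01v, h _ e011]
    · rw [fEv2, fEv2, h _ e02v, h _ e022]
  · rfl

lemma evans_realizable : evansMDAG.Realizable (fun _ => 2) Pev := by
  refine ⟨⟨?_, ?_⟩, (fun _ => 2), eEv, PEev, fEv, PEev_dist, fEv_local, ?_⟩
  · intro x
    simp only [Pev]
    split_ifs <;> norm_num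
  · simp only [Pev, Finset.sum_add_distrib, Finset.sum_ite_eq', Finset.mem_univ, if_true]
    norm_num
  · intro xv
    obtain ⟨x0, x1, x2, rfl⟩ : ∃ a b c, xv = ![a, b, c] :=
      ⟨xv 0, xv 1, xv 2, by funext i; fin_cases i <;> rfl⟩
    refine Eq.trans ?_
      (Fintype.sum_equiv eL _ _ fun p => Fintype.sum_equiv eEps _ _ fun q => rfl)
    fin_cases x0 <;> fin_cases x1 <;> fin_cases x2 <;>
      · simp only [Fintype.sum_prod_type, Fin.sum_univ_two, Fintype.prod_sum_type,
          Fin.prod_univ_three, prodFacets, eL, eEps, Equiv.coe_fn_mk, jointVal,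
          fEv, fEv0, fEv1, fEv2, fEvR, PEev]
        simp (config := { decide := true }) [Pev, F01_ne_F02, F01_ne_F02.symm]
        try norm_num

/-- With all three visible variables binary and
`S = {(0,0,0), (0,1,1), (1,0,0)}`:
(i) some distribution realizable by the Evans mDAG at binary cardinalities has support
exactly `S`; and (ii) no distribution with support `S` is realizable by Instrumental
BAC, and none is realizable by Instrumental CAB.  Consequently, neither Instrumental
BAC nor Instrumental CAB observationally dominates the Evans mDAG. -/
theorem evans_not_dominated_by_instrumentals :
    ((∃ P : ((v : Fin 3) → Fin 2) → ℝ,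
        evansMDAG.Realizable (fun _ => 2) P ∧ ∀ x, x ∈ evansSupport ↔ 0 < P x) ∧
      (∀ P : ((v : Fin 3) → Fin 2) → ℝ, (∀ x, x ∈ evansSupport ↔ 0 < P x) →
        ¬ instBAC.Realizable (fun _ => 2) P) ∧
      (∀ P : ((v : Fin 3) → Fin 2) → ℝ, (∀ x, x ∈ evansSupport ↔ 0 < P x) →
        ¬ instCAB.Realizable (fun _ => 2) P)) ∧
    ¬ instBAC.ObsDominates evansMDAG ∧ ¬ instCAB.ObsDominates evansMDAG := by
  refine ⟨⟨⟨Pev, evans_realizable, Pev_supp⟩, bac_not_realizable, cab_not_realizable⟩,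
    ?_, ?_⟩
  · intro hdom
    exact bac_not_realizable Pev Pev_supp (hdom _ Pev evans_realizable)
  · intro hdom
    exact cab_not_realizable Pev Pev_supp (hdom _ Pev evans_realizable)
end
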